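/- For every fixed integer s ≥ 1, there are (up to isomorphism) only finitely many 5-vertex-critical (P_5, K_{1,s}+P_1)-free graphs. -/

import Mathlib

open SimpleGraph

/-- `G` contains no induced subgraph isomorphic to `H`. -/
def HFree {W V : Type*} (H : SimpleGraph W) (G : SimpleGraph V) : Prop :=
  IsEmpty (H ↪g G)

/-- `G` is `k`-vertex-critical: `χ(G) = k` and deleting any vertex decreases
the chromatic number below `k`. -/
def IsKVertexCritical {V : Type*} (G : SimpleGraph V) (k : ℕ) : Prop :=
  G.chromaticNumber = k ∧ ∀ v : V, (G.induce {v}ᶜ).chromaticNumber < k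

/-- The star `K_{1,s}`: center `0`, leaves `1, …, s`. -/
def starGraph (s : ℕ) : SimpleGraph (Fin (s + 1)) :=
  SimpleGraph.fromRel (fun i _ => (i : ℕ) = 0)

/-- `K_{1,s} + P_1`: the disjoint union of the star `K_{1,s}`
(center `0`, leaves `1, …, s`) and the isolated vertex `s + 1`. -/
def starPlusP1 (s : ℕ) : SimpleGraph (Fin (s + 2)) :=
  SimpleGraph.fromRel (fun i j => (i : ℕ) = 0 ∧ (j : ℕ) ≠ 0 ∧ (j : ℕ) ≤ s)

/-- The complement of `K_3 + 2P_1`: vertices `0,1,2` pairwise nonadjacent,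
vertices `3,4` adjacent to everything else. -/
def coK3Plus2P1 : SimpleGraph (Fin 5) :=
  SimpleGraph.fromRel (fun i j => 3 ≤ (i : ℕ) ∨ 3 ≤ (j : ℕ))

section Interface
variable {V W : Type*}

lemma hfree_of_embedding {X : Type*} {H : SimpleGraph X} {G : SimpleGraph V} {G' : SimpleGraph W}
    (e : G ↪g G') (h : HFree H G') : HFree H G :=
  ⟨fun f => h.false (e.comp f)⟩

lemma not_colorable_succ {G : SimpleGraph V} {n : ℕ} (h : G.chromaticNumber = n) {m : ℕ}
    (hm : m < n) : ¬ G.Colorable m := by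
  intro hc
  have := hc.chromaticNumber_le
  rw [h, Nat.cast_le] at this
  omega

lemma colorable_of_chromaticNumber_eq {G : SimpleGraph V} {n : ℕ} (h : G.chromaticNumber = n) :
    G.Colorable n := chromaticNumber_le_iff_colorable.1 h.le

lemma chromaticNumber_eq_of {G : SimpleGraph V} {n : ℕ} (h1 : G.Colorable n)
    (h2 : ¬ G.Colorable (n-1)) : G.chromaticNumber = n := by
  have hle : G.chromaticNumber ≤ n := h1.chromaticNumber_le
  lift G.chromaticNumber to ℕ using (lt_of_le_of_lt hle (by simp [lt_top_iff_ne_top])).ne with m hm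
  rw [Nat.cast_le] at hle
  rw [Nat.cast_inj]
  by_contra hne
  have hcm : G.Colorable m := by
    have := chromaticNumber_le_iff_colorable (G := G) (n := m)
    rw [← hm] at this
    exact this.1 le_rfl
  exact h2 (hcm.mono (by omega))

lemma colorable_pred_of_lt {G : SimpleGraph V} {n : ℕ} (hn : 1 ≤ n)
    (h : G.chromaticNumber < n) : G.Colorable (n - 1) := by
  have hle : G.chromaticNumber ≤ ((n - 1 : ℕ) : ℕ∞) := by
    have hne : G.chromaticNumber ≠ ⊤ := (h.trans_le le_top).ne
    lift G.chromaticNumber to ℕ using hne with m hm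
    rw [Nat.cast_lt] at h
    rw [Nat.cast_le]
    omega
  exact chromaticNumber_le_iff_colorable.1 hle

lemma not_colorable_zero {G : SimpleGraph V} [Nonempty V] : ¬ G.Colorable 0 := by
  rintro ⟨c⟩
  exact Fin.elim0 (c (Classical.arbitrary V))

end Interface

def ram : ℕ → ℕ → ℕ
  | 0, _ => 0
  | _+1, 0 => 0
  | a+1, b+1 => ram a (b+1) + ram (a+1) b + 1

def RamseyProp (a b : ℕ) : Prop := ∀ (V : Type) (G : SimpleGraph V) (A : Finset V),
    ram a b ≤ A.card →
    (∃ t ⊆ A, t.card = a ∧ (t : Set V).Pairwise G.Adj) ∨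
    (∃ t ⊆ A, t.card = b ∧ (t : Set V).Pairwise fun x y => ¬ G.Adj x y)

lemma ramsey : ∀ a b, RamseyProp a b := by
  have base0 : ∀ b, RamseyProp 0 b := by
    intro b V G A _
    exact Or.inl ⟨∅, Finset.empty_subset _, Finset.card_empty, by simp⟩
  have base0' : ∀ a, RamseyProp a 0 := by
    intro a V G A _
    exact Or.inr ⟨∅, Finset.empty_subset _, Finset.card_empty, by simp⟩
  intro a
  induction a with
  | zero => exact base0
  | succ a iha =>
    intro b
    induction b with
    | zero => exact base0' _
    | succ b ihb =>
      intro V G A hcard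
      classical
      have hpos : 0 < A.card := by
        have : 0 < ram (a+1) (b+1) := by simp [ram]
        omega
      obtain ⟨v, hv⟩ := Finset.card_pos.1 hpos
      set N := (A.erase v).filter (fun x => G.Adj v x) with hN
      set M := (A.erase v).filter (fun x => ¬ G.Adj v x) with hM
      have hNM : N.card + M.card = A.card - 1 := by
        rw [hN, hM, Finset.card_filter_add_card_filter_not]
        rw [Finset.card_erase_of_mem hv]
      have hram : ram a (b+1) + ram (a+1) b + 1 ≤ A.card := by
        simpa [ram] using hcard
      have hcases : ram a (b+1) ≤ N.card ∨ ram (a+1) b ≤ M.card := by omega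
      rcases hcases with h | h
      · rcases iha (b+1) V G N h with ⟨t, hts, htc, htp⟩ | ⟨t, hts, htc, htp⟩
        · refine Or.inl ⟨insert v t, ?_, ?_, ?_⟩
          · intro x hx
            rcases Finset.mem_insert.1 hx with rfl | hx
            · exact hv
            · exact Finset.mem_of_mem_erase (Finset.mem_of_mem_filter _ (hts hx))
          · rw [Finset.card_insert_of_notMem, htc]
            intro hvt
            exact Finset.notMem_erase v A (Finset.mem_of_mem_filter _ (hts hvt))
          · rw [Finset.coe_insert]
            refine (haveI : Std.Symm G.Adj := ⟨fun x y h => h.symm⟩; Set.pairwise_insert_of_symm).2 ⟨htp, ?_⟩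
            intro x hx _
            exact (Finset.mem_filter.1 (hts hx)).2
        · exact Or.inr ⟨t, fun x hx => Finset.mem_of_mem_erase
            (Finset.mem_of_mem_filter _ (hts hx)), htc, htp⟩
      · rcases ihb V G M h with ⟨t, hts, htc, htp⟩ | ⟨t, hts, htc, htp⟩
        · exact Or.inl ⟨t, fun x hx => Finset.mem_of_mem_erase
            (Finset.mem_of_mem_filter _ (hts hx)), htc, htp⟩
        · refine Or.inr ⟨insert v t, ?_, ?_, ?_⟩
          · intro x hx
            rcases Finset.mem_insert.1 hx with rfl | hx
            · exact hv
            · exact Finset.mem_of_mem_erase (Finset.mem_of_mem_filter _ (hts hx))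
          · rw [Finset.card_insert_of_notMem, htc]
            intro hvt
            exact Finset.notMem_erase v A (Finset.mem_of_mem_filter _ (hts hvt))
          · rw [Finset.coe_insert]
            refine (haveI : Std.Symm (fun x y => ¬ G.Adj x y) := ⟨fun x y (hxy : ¬ G.Adj x y) (h2 : G.Adj y x) => hxy h2.symm⟩; Set.pairwise_insert_of_symm).2
              ⟨htp, ?_⟩
            intro x hx _
            exact (Finset.mem_filter.1 (hts hx)).2
section Emb
variable {V : Type} {G : SimpleGraph V}

lemma star_embedding_exists {s : ℕ} (c : V) (w : Fin s → V) (p : V)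
    (hw_inj : Function.Injective w)
    (hcw : ∀ i, G.Adj c (w i))
    (hww : ∀ i j : Fin s, i ≠ j → ¬ G.Adj (w i) (w j))
    (hpc : ¬ G.Adj p c) (hpw : ∀ i, ¬ G.Adj p (w i))
    (hp_ne_c : p ≠ c) (hp_ne_w : ∀ i, p ≠ w i) :
    Nonempty (starPlusP1 s ↪g G) := by
  have hc_ne_w : ∀ i, c ≠ w i := fun i => (hcw i).ne
  set f : Fin (s+2) → V := fun x =>
    if hx : (x : ℕ) = 0 then c
    else if hx2 : (x : ℕ) ≤ s then w ⟨(x : ℕ) - 1, by omega⟩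
    else p with hf
  have hfzero : ∀ (x : Fin (s+2)), (x : ℕ) = 0 → f x = c := by
    intro x h1; simp only [hf]; rw [dif_pos h1]
  have hfmid : ∀ (x : Fin (s+2)) (h1 : (x : ℕ) ≠ 0) (h2 : (x : ℕ) ≤ s),
      f x = w ⟨(x : ℕ) - 1, by omega⟩ := by
    intro x h1 h2; simp only [hf]; rw [dif_neg h1, dif_pos h2]
  have hftop : ∀ (x : Fin (s+2)), ¬ (x : ℕ) ≤ s → f x = p := by
    intro x h1
    have h2 : ¬ (x : ℕ) = 0 := by omega
    simp only [hf]; rw [dif_neg h2, dif_neg h1]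
  have hinj : Function.Injective f := by
    intro x y hxy
    by_cases hx0 : (x : ℕ) = 0 <;> by_cases hy0 : (y : ℕ) = 0
    · exact Fin.ext (by omega)
    · by_cases hy2 : (y : ℕ) ≤ s
      · rw [hfzero x hx0, hfmid y hy0 hy2] at hxy
        exact absurd hxy (hc_ne_w _)
      · rw [hfzero x hx0, hftop y hy2] at hxy
        exact absurd hxy.symm hp_ne_c
    · by_cases hx2 : (x : ℕ) ≤ s
      · rw [hfzero y hy0, hfmid x hx0 hx2] at hxy
        exact absurd hxy.symm (hc_ne_w _)
      · rw [hfzero y hy0, hftop x hx2] at hxy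
        exact absurd hxy hp_ne_c
    · by_cases hx2 : (x : ℕ) ≤ s <;> by_cases hy2 : (y : ℕ) ≤ s
      · rw [hfmid x hx0 hx2, hfmid y hy0 hy2] at hxy
        have h3 : ((⟨(x:ℕ) - 1, by omega⟩ : Fin s) : ℕ) = ((⟨(y:ℕ) - 1, by omega⟩ : Fin s) : ℕ) :=
          congrArg Fin.val (hw_inj hxy)
        simp only at h3
        exact Fin.ext (by omega)
      · rw [hfmid x hx0 hx2, hftop y hy2] at hxy
        exact absurd hxy.symm (hp_ne_w _)
      · rw [hfmid y hy0 hy2, hftop x hx2] at hxy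
        exact absurd hxy (hp_ne_w _)
      · exact Fin.ext (by omega)
  refine ⟨⟨⟨f, hinj⟩, ?_⟩⟩
  intro x y
  show G.Adj (f x) (f y) ↔ (starPlusP1 s).Adj x y
  rw [starPlusP1, fromRel_adj]
  constructor
  · intro hadj
    have hxy : x ≠ y := fun h => G.irrefl (h ▸ hadj)
    refine ⟨hxy, ?_⟩
    by_cases hx0 : (x : ℕ) = 0 <;> by_cases hy0 : (y : ℕ) = 0
    · exact absurd (Fin.ext (by omega)) hxy
    · by_cases hy2 : (y : ℕ) ≤ s
      · exact Or.inl ⟨hx0, hy0, hy2⟩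
      · rw [hfzero x hx0, hftop y hy2] at hadj
        exact absurd hadj.symm hpc
    · by_cases hx2 : (x : ℕ) ≤ s
      · exact Or.inr ⟨hy0, hx0, hx2⟩
      · rw [hfzero y hy0, hftop x hx2] at hadj
        exact absurd hadj hpc
    · exfalso
      by_cases hx2 : (x : ℕ) ≤ s <;> by_cases hy2 : (y : ℕ) ≤ s
      · rw [hfmid x hx0 hx2, hfmid y hy0 hy2] at hadj
        refine hww _ _ ?_ hadj
        intro h3
        have h4 : (x:ℕ) - 1 = (y:ℕ) - 1 := congrArg Fin.val h3
        exact hxy (Fin.ext (by omega))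
      · rw [hfmid x hx0 hx2, hftop y hy2] at hadj
        exact hpw _ hadj.symm
      · rw [hfmid y hy0 hy2, hftop x hx2] at hadj
        exact hpw _ hadj
      · exact hxy (Fin.ext (by omega))
  · rintro ⟨hxy, ⟨hx0, hy0, hy2⟩ | ⟨hy0, hx0, hx2⟩⟩
    · rw [hfzero x hx0, hfmid y hy0 hy2]
      exact hcw _
    · rw [hfzero y hy0, hfmid x hx0 hx2]
      exact (hcw _).symm

lemma path_embedding_exists (v : ℕ → V)
    (hadj : ∀ i, i < 4 → G.Adj (v i) (v (i+1)))
    (hnadj : ∀ i j, j ≤ 4 → i + 2 ≤ j → ¬ G.Adj (v i) (v j))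
    (hinj : ∀ i j, i < j → j ≤ 4 → v i ≠ v j) :
    Nonempty (pathGraph 5 ↪g G) := by
  set f : Fin 5 → V := fun x => v x.val with hf
  have hinj' : Function.Injective f := by
    intro x y hxy
    rcases Nat.lt_trichotomy (x : ℕ) (y : ℕ) with h | h | h
    · exact absurd hxy (hinj _ _ h (by omega))
    · exact Fin.ext h
    · exact absurd hxy.symm (hinj _ _ h (by omega))
  refine ⟨⟨⟨f, hinj'⟩, ?_⟩⟩
  intro x y
  show G.Adj (v x.val) (v y.val) ↔ (pathGraph 5).Adj x y
  rw [pathGraph_adj]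
  constructor
  · intro hadj'
    rcases Nat.lt_trichotomy (x : ℕ) (y : ℕ) with h | h | h
    · by_cases h2 : (x : ℕ) + 1 = (y : ℕ)
      · exact Or.inl h2
      · exact absurd hadj' (hnadj _ _ (by omega) (by omega))
    · exact absurd hadj' (by rw [show x.val = y.val from h]; exact G.irrefl)
    · by_cases h2 : (y : ℕ) + 1 = (x : ℕ)
      · exact Or.inr h2
      · exact absurd hadj'.symm (hnadj _ _ (by omega) (by omega))
  · rintro (h | h)
    · have := hadj x.val (by omega)
      rwa [h] at this
    · have := hadj y.val (by omega)
      rw [h] at this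
      exact this.symm

lemma walk_split : ∀ {u x : V} (p : G.Walk u x) (i : ℕ), i ≤ p.length →
    ∃ (q : G.Walk u (p.getVert i)) (r : G.Walk (p.getVert i) x),
      q.length = i ∧ r.length = p.length - i := by
  intro u x p
  induction p with
  | nil =>
    intro i hi
    simp only [SimpleGraph.Walk.length_nil, Nat.le_zero] at hi
    subst hi
    exact ⟨SimpleGraph.Walk.nil, SimpleGraph.Walk.nil, rfl, rfl⟩
  | cons h q ih =>
    intro i hi
    cases i with
    | zero =>
      refine ⟨SimpleGraph.Walk.nil.copy rfl (SimpleGraph.Walk.getVert_zero _).symm,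
        (SimpleGraph.Walk.cons h q).copy (SimpleGraph.Walk.getVert_zero _).symm rfl, ?_, ?_⟩ <;>
        simp
    | succ i =>
      obtain ⟨q1, r1, hq1, hr1⟩ := ih i (by simpa [Nat.succ_le_iff] using hi)
      refine ⟨(q1.cons h).copy rfl (SimpleGraph.Walk.getVert_cons_succ _ _).symm,
        r1.copy (SimpleGraph.Walk.getVert_cons_succ _ _).symm rfl, ?_, ?_⟩ <;>
        simp [hq1, hr1]
end Emb
section Split
variable {V : Type} {G : SimpleGraph V}

/-- generic embedding between induced subgraphs along a vertex map -/
def induceEmbOf {W : Type} {H : SimpleGraph W} {S : Set V} {T : Set W}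
    (f : ↥S → ↥T) (hinj : Function.Injective f)
    (hadj : ∀ a b : ↥S, H.Adj ↑(f a) ↑(f b) ↔ G.Adj ↑a ↑b) :
    G.induce S ↪g H.induce T where
  toFun := f
  inj' := hinj
  map_rel_iff' := by
    intro a b
    show H.Adj ↑(f a) ↑(f b) ↔ G.Adj ↑a ↑b
    exact hadj a b

lemma combine_colorings [Fintype V] (F : Set V) {a b : ℕ}
    (hF : (G.induce F).Colorable a) (hL : (G.induce Fᶜ).Colorable b) :
    G.Colorable (a + b) := by
  classical
  obtain ⟨cF⟩ := hF
  obtain ⟨cL⟩ := hL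
  have c : G.Coloring (Fin a ⊕ Fin b) := by
    refine Coloring.mk
      (fun v => if h : v ∈ F then Sum.inl (cF ⟨v, h⟩) else Sum.inr (cL ⟨v, h⟩)) ?_
    intro u v hadj
    by_cases hu : u ∈ F <;> by_cases hv : v ∈ F
    · simp only [dif_pos hu, dif_pos hv]
      intro hc
      exact cF.valid (by exact hadj : (G.induce F).Adj ⟨u, hu⟩ ⟨v, hv⟩)
        (Sum.inl_injective hc)
    · simp [dif_pos hu, dif_neg hv]
    · simp [dif_neg hu, dif_pos hv]
    · simp only [dif_neg hu, dif_neg hv]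
      intro hc
      exact cL.valid (by exact hadj : (G.induce Fᶜ).Adj ⟨u, hu⟩ ⟨v, hv⟩)
        (Sum.inr_injective hc)
  have := c.colorable
  simpa using this

lemma split_coloring [Fintype V] {n : ℕ} (hG : G.Colorable n) (F : Set V)
    (hcross : ∀ x ∈ F, ∀ y ∈ Fᶜ, G.Adj x y) :
    ∃ p q, p + q ≤ n ∧ (G.induce F).Colorable p ∧ (G.induce Fᶜ).Colorable q := by
  classical
  obtain ⟨c⟩ := hG
  set CF : Finset (Fin n) := Finset.univ.image (fun v : ↥F => c ↑v) with hCF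
  set CL : Finset (Fin n) := Finset.univ.image (fun v : ↥(Fᶜ) => c ↑v) with hCL
  have hdisj : Disjoint CF CL := by
    rw [Finset.disjoint_left]
    intro x hxF hxL
    obtain ⟨u, _, hu⟩ := Finset.mem_image.1 hxF
    obtain ⟨w, _, hw⟩ := Finset.mem_image.1 hxL
    exact c.valid (hcross ↑u u.2 ↑w w.2) (by rw [hu, hw])
  have hcard : CF.card + CL.card ≤ n := by
    rw [← Finset.card_union_of_disjoint hdisj]
    simpa using Finset.card_le_univ (CF ∪ CL)
  refine ⟨CF.card, CL.card, hcard, ⟨?_⟩, ⟨?_⟩⟩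
  · refine Coloring.mk (fun v => CF.equivFin ⟨c ↑v, Finset.mem_image.2 ⟨v, Finset.mem_univ _, rfl⟩⟩) ?_
    intro u v hadj hc
    have : c ↑u = c ↑v := congrArg Subtype.val (CF.equivFin.injective hc)
    exact c.valid (by exact hadj : G.Adj ↑u ↑v) this
  · refine Coloring.mk (fun v => CL.equivFin ⟨c ↑v, Finset.mem_image.2 ⟨v, Finset.mem_univ _, rfl⟩⟩) ?_
    intro u v hadj hc
    have : c ↑u = c ↑v := congrArg Subtype.val (CL.equivFin.injective hc)
    exact c.valid (by exact hadj : G.Adj ↑u ↑v) this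
end Split
section P5
variable {V : Type} {G : SimpleGraph V}

lemma dist_le_three (hfree : HFree (pathGraph 5) G) {u x : V} (h : G.Reachable u x) :
    G.dist u x ≤ 3 := by
  by_contra hd
  push_neg at hd
  obtain ⟨p, hp⟩ := h.exists_walk_length_eq_dist
  have hd4 : 4 ≤ G.dist u x := hd
  have key : ∀ i j : ℕ, i < j → j ≤ 4 → (¬ G.Adj (p.getVert i) (p.getVert j) ∧
      p.getVert i ≠ p.getVert j) ∨ (j = i + 1) := by
    intro i j hij hj4
    by_cases hcons : j = i + 1
    · exact Or.inr hcons
    · left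
      obtain ⟨qi, ri, hqi, hri⟩ := walk_split p i (by omega)
      obtain ⟨qj, rj, hqj, hrj⟩ := walk_split p j (by omega)
      constructor
      · intro hadj
        have hle := SimpleGraph.dist_le (qi.append (SimpleGraph.Walk.cons hadj rj))
        rw [SimpleGraph.Walk.length_append, SimpleGraph.Walk.length_cons, hqi, hrj, hp] at hle
        omega
      · intro heq
        have hle := SimpleGraph.dist_le (qi.append (rj.copy heq.symm rfl))
        rw [SimpleGraph.Walk.length_append, SimpleGraph.Walk.length_copy, hqi, hrj, hp] at hle
        omega
  refine hfree.false (Classical.choice (path_embedding_exists (fun i => p.getVert i) ?_ ?_ ?_))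
  · intro i hi
    exact p.adj_getVert_succ (by omega)
  · intro i j hj4 hij
    rcases key i j (by omega) hj4 with ⟨h1, _⟩ | h1
    · exact h1
    · omega
  · intro i j hij hj4
    rcases key i j hij hj4 with ⟨_, h2⟩ | h2
    · exact h2
    · subst h2
      intro heq
      have hadj := p.adj_getVert_succ (i := i) (by omega)
      rw [heq] at hadj
      exact G.irrefl hadj

lemma ball_card_bound [Fintype V] {D : ℕ}
    (hdeg : ∀ v : V, ∀ t : Finset V, (∀ x ∈ t, G.Adj v x) → t.card ≤ D) (u : V)
    (hreach : ∀ x : V, ∃ p : G.Walk x u, p.length ≤ 3) :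
    Fintype.card V ≤ (D + 1) ^ 3 := by
  classical
  set B : ℕ → Finset V := fun i => Nat.rec {u}
    (fun _ Bi => Bi ∪ Bi.biUnion (fun y => Finset.univ.filter (fun z => G.Adj y z))) i with hB
  have hBsucc : ∀ i, B (i+1) = B i ∪ (B i).biUnion (fun y => Finset.univ.filter (fun z => G.Adj y z)) :=
    fun i => rfl
  have humem : ∀ i, u ∈ B i := by
    intro i
    induction i with
    | zero => exact Finset.mem_singleton_self u
    | succ i ih => rw [hBsucc]; exact Finset.mem_union_left _ ih
  have hmem : ∀ (i : ℕ) (x : V) (p : G.Walk x u), p.length ≤ i → x ∈ B i := by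
    intro i
    induction i with
    | zero =>
      intro x p hle
      cases p with
      | nil => exact humem 0
      | cons h q => simp at hle
    | succ i ih =>
      intro x p hle
      cases p with
      | nil => exact humem (i+1)
      | @cons _ y _ hadj q =>
        rw [SimpleGraph.Walk.length_cons] at hle
        rw [hBsucc]
        refine Finset.mem_union_right _ (Finset.mem_biUnion.2 ⟨y, ih y q (by omega), ?_⟩)
        simp [hadj.symm]
  have hcard : ∀ i, (B i).card ≤ (D + 1) ^ i := by
    intro i
    induction i with
    | zero =>
      rw [show B 0 = {u} from rfl]
      simp
    | succ i ih =>
      rw [hBsucc]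
      calc (B i ∪ (B i).biUnion _).card ≤ (B i).card + ((B i).biUnion _).card :=
            Finset.card_union_le _ _
        _ ≤ (B i).card + ∑ y ∈ B i, (Finset.univ.filter (fun z => G.Adj y z)).card := by
            gcongr
            exact Finset.card_biUnion_le
        _ ≤ (B i).card + ∑ y ∈ B i, D := by
            gcongr with y hy
            exact hdeg y _ (fun x hx => (Finset.mem_filter.1 hx).2)
        _ = (B i).card * (D + 1) := by rw [Finset.sum_const, smul_eq_mul]; ring
        _ ≤ (D + 1) ^ i * (D + 1) := by gcongr
        _ = (D + 1) ^ (i + 1) := by ring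
  have huniv : (Finset.univ : Finset V) ⊆ B 3 := by
    intro x _
    obtain ⟨p, hple⟩ := hreach x
    exact hmem 3 x p hple
  calc Fintype.card V = (Finset.univ : Finset V).card := rfl
    _ ≤ (B 3).card := Finset.card_le_card huniv
    _ ≤ (D + 1) ^ 3 := hcard 3

lemma preconnected_of_critical [Fintype V] {k : ℕ}
    (hcol : ∀ v : V, (G.induce {v}ᶜ).Colorable k) (hncol : ¬ G.Colorable k) :
    G.Preconnected := by
  intro x y
  by_contra hxy
  classical
  obtain ⟨c2⟩ := hcol y
  obtain ⟨c1⟩ := hcol x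
  have hSy : ∀ w, G.Reachable x w → w ∈ ({y}ᶜ : Set V) := by
    intro w h
    simp only [Set.mem_compl_iff, Set.mem_singleton_iff]
    intro hw
    exact hxy (hw ▸ h)
  have hSx : ∀ w, ¬ G.Reachable x w → w ∈ ({x}ᶜ : Set V) := by
    intro w h
    simp only [Set.mem_compl_iff, Set.mem_singleton_iff]
    intro hw
    exact h (by rw [hw])
  refine hncol ⟨Coloring.mk (fun w => if h : G.Reachable x w
      then c2 ⟨w, hSy w h⟩ else c1 ⟨w, hSx w h⟩) ?_⟩
  intro a b hadj
  by_cases ha : G.Reachable x a <;> by_cases hb : G.Reachable x b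
  · rw [dif_pos ha, dif_pos hb]
    exact c2.valid (by exact hadj : (G.induce {y}ᶜ).Adj ⟨a, hSy a ha⟩ ⟨b, hSy b hb⟩)
  · exact absurd (ha.trans hadj.reachable) hb
  · exact absurd (hb.trans hadj.symm.reachable) ha
  · rw [dif_neg ha, dif_neg hb]
    exact c1.valid (by exact hadj : (G.induce {x}ᶜ).Adj ⟨a, hSx a ha⟩ ⟨b, hSx b hb⟩)
end P5
section Main

lemma key_bound (s : ℕ) (hs : 1 ≤ s) : ∀ k : ℕ, ∃ N : ℕ,
    ∀ (V : Type) [Fintype V] (G : SimpleGraph V),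
      IsKVertexCritical G k → HFree (pathGraph 5) G → HFree (starPlusP1 s) G →
      Fintype.card V ≤ N := by
  intro k
  induction k using Nat.strong_induction_on with
  | _ k IH =>
  rcases Nat.eq_zero_or_pos k with rfl | hk1
  · refine ⟨0, fun V _ G hcrit _ _ => ?_⟩
    have h0 : G.chromaticNumber = ((0:ℕ) : ℕ∞) := by exact_mod_cast hcrit.1
    have := G.isEmpty_of_chromaticNumber_eq_zero (by exact_mod_cast h0)
    simp [Fintype.card_eq_zero]
  · choose f hf using IH
    set M : ℕ := (Finset.range k).sup (fun j => if h : j < k then f j h else 0) with hM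
    have hMle : ∀ j (h : j < k), f j h ≤ M := by
      intro j h
      have := Finset.le_sup (f := fun j => if h : j < k then f j h else 0)
        (Finset.mem_range.2 h)
      simpa [h] using this
    set D : ℕ := ram (k-1) s with hD
    set m0 : ℕ := s*s + 3*s + 9 with hm0
    refine ⟨max (max k ((k-1) * (max m0 M) + 1)) ((D + 1)^3), ?_⟩
    intro V _ G hcrit hfreeP hfreeS
    classical
    have hchrom : G.chromaticNumber = (k : ℕ∞) := hcrit.1
    have hcolv : ∀ v : V, (G.induce {v}ᶜ).Colorable (k-1) := by
      intro v
      exact colorable_pred_of_lt hk1 (by exact_mod_cast hcrit.2 v)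
    have hcolk : G.Colorable k := colorable_of_chromaticNumber_eq hchrom
    have hncol : ¬ G.Colorable (k-1) := not_colorable_succ hchrom (by omega)
    have hne : Nonempty V := by
      by_contra hempty
      rw [not_nonempty_iff] at hempty
      have := G.chromaticNumber_eq_zero_of_isEmpty
      rw [hchrom] at this
      exact absurd (by exact_mod_cast this : k = 0) (by omega)
    -- independence number machinery
    set Indep : Finset V → Prop := fun t => (t : Set V).Pairwise (fun a b => ¬ G.Adj a b)
      with hIndepDef
    set ISets : Finset (Finset V) := Finset.univ.powerset.filter Indep with hISets
    set α : ℕ := ISets.sup Finset.card with hα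
    have hIndep_le : ∀ t : Finset V, Indep t → t.card ≤ α := by
      intro t ht
      exact Finset.le_sup (Finset.mem_filter.2 ⟨Finset.mem_powerset.2 (Finset.subset_univ t), ht⟩)
    have hcount : Fintype.card V ≤ (k-1) * α + 1 := by
      obtain ⟨v0⟩ := hne
      obtain ⟨c⟩ := hcolv v0
      have hcard1 : Fintype.card ↥({v0}ᶜ : Set V) + 1 = Fintype.card V := by
        rw [Fintype.card_compl_set]
        have h1 : Fintype.card ↥({v0} : Set V) = 1 := by simp
        have h2 : 0 < Fintype.card V := Fintype.card_pos_iff.2 ⟨v0⟩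
        have h3 : Fintype.card ↥({v0} : Set V) ≤ Fintype.card V :=
          Fintype.card_le_of_injective Subtype.val Subtype.val_injective
        omega
      have hfib : (Finset.univ : Finset ↥({v0}ᶜ : Set V)).card =
          ∑ i : Fin (k-1), (Finset.univ.filter (fun w => c w = i)).card := by
        rw [← Finset.card_eq_sum_card_fiberwise (f := c) (fun x _ => Finset.mem_univ _)]
      have hfible : ∀ i : Fin (k-1), (Finset.univ.filter (fun w => c w = i)).card ≤ α := by
        intro i
        set t : Finset V := (Finset.univ.filter (fun w => c w = i)).image Subtype.val with ht
        have hcardt : t.card = (Finset.univ.filter (fun w => c w = i)).card :=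
          Finset.card_image_of_injective _ Subtype.val_injective
        rw [← hcardt]
        refine hIndep_le t ?_
        intro a ha b hb hab hadj
        simp only [ht, Finset.coe_image, Set.mem_image] at ha hb
        obtain ⟨wa, hwa, rfl⟩ := ha
        obtain ⟨wb, hwb, rfl⟩ := hb
        rw [Finset.mem_coe, Finset.mem_filter] at hwa hwb
        exact c.valid (by exact hadj : (G.induce {v0}ᶜ).Adj wa wb) (hwa.2.trans hwb.2.symm)
      have : (Finset.univ : Finset ↥({v0}ᶜ : Set V)).card ≤ (k-1) * α := by
        rw [hfib]
        calc ∑ i : Fin (k-1), (Finset.univ.filter (fun w => c w = i)).card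
            ≤ ∑ _i : Fin (k-1), α := Finset.sum_le_sum (fun i _ => hfible i)
          _ = (k-1) * α := by simp [Finset.sum_const, mul_comm]
      have hcv : (Finset.univ : Finset ↥({v0}ᶜ : Set V)).card = Fintype.card ↥({v0}ᶜ : Set V) := rfl
      omega
    by_cases hαle : α ≤ max m0 M
    · have : Fintype.card V ≤ (k-1) * (max m0 M) + 1 := by
        calc Fintype.card V ≤ (k-1) * α + 1 := hcount
          _ ≤ (k-1) * (max m0 M) + 1 := by gcongr
      exact le_trans this (le_trans (le_max_right _ _) (le_max_left _ _))
    · push_neg at hαle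
      -- get a maximum independent set I
      have hISne : ISets.Nonempty := ⟨∅, Finset.mem_filter.2 ⟨Finset.mem_powerset.2
        (Finset.empty_subset _), by simp [hIndepDef]⟩⟩
      obtain ⟨I, hIone, hIcard⟩ := Finset.exists_mem_eq_sup ISets hISne Finset.card
      have hIindep : Indep I := (Finset.mem_filter.1 hIone).2
      have hIcard' : I.card = α := hIcard.symm
      have hInadj : ∀ a ∈ I, ∀ b ∈ I, a ≠ b → ¬ G.Adj a b := by
        intro a ha b hb hab
        exact hIindep ha hb hab
      have hm : m0 < I.card := by rw [hIcard']; exact lt_of_le_of_lt (le_max_left _ _) hαle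
      -- star builder: if v has s independent "leaves" adjacent to it and some vertex of I
      -- is completely missed, contradiction
      have star_contra : ∀ (c : V) (w : Fin s → V) (p : V), Function.Injective w →
          (∀ i, G.Adj c (w i)) → (∀ i j, i ≠ j → ¬ G.Adj (w i) (w j)) →
          ¬ G.Adj p c → (∀ i, ¬ G.Adj p (w i)) → p ≠ c → (∀ i, p ≠ w i) → False := by
        intro c w p h1 h2 h3 h4 h5 h6 h7
        exact hfreeS.false (Classical.choice (star_embedding_exists c w p h1 h2 h3 h4 h5 h6 h7))
      -- Fact 1 : every vertex is "low" or "full" w.r.t. I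
      have fact1 : ∀ v : V, (I.filter (fun u => G.Adj v u)).card ≤ s - 1 ∨
          (∀ u ∈ I, G.Adj v u) := by
        intro v
        by_contra hcon
        push_neg at hcon
        obtain ⟨hlow, u, hu, hvu⟩ := hcon
        have hslef : s ≤ (I.filter (fun u => G.Adj v u)).card := by omega
        obtain ⟨S, hSsub, hScard⟩ := Finset.exists_subset_card_eq hslef
        set w : Fin s → V := fun i => ((S.equivFinOfCardEq hScard).symm i : V) with hw
        have hwmem : ∀ i, w i ∈ S := fun i => Finset.coe_mem _
        have hwI : ∀ i, w i ∈ I ∧ G.Adj v (w i) := by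
          intro i
          have := hSsub (hwmem i)
          exact ⟨(Finset.mem_filter.1 this).1, (Finset.mem_filter.1 this).2⟩
        have hwinj : Function.Injective w := by
          intro i j hij
          exact (S.equivFinOfCardEq hScard).symm.injective (Subtype.ext hij)
        have huS : u ∉ S := by
          intro huS
          exact hvu (Finset.mem_filter.1 (hSsub huS)).2
        refine star_contra v w u hwinj (fun i => (hwI i).2) ?_ ?_ ?_ ?_ ?_
        · intro i j hij
          exact hInadj _ (hwI i).1 _ (hwI j).1 (fun h => hij (hwinj h))
        · intro hadj
          exact hvu hadj.symm
        · intro i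
          refine hInadj u hu _ (hwI i).1 ?_
          intro h
          exact huS (h ▸ hwmem i)
        · intro h
          subst h
          exact hInadj u hu _ (hwI ⟨0, hs⟩).1 (hwI ⟨0, hs⟩).2.ne (hwI ⟨0, hs⟩).2
        · intro i h
          exact huS (h ▸ hwmem i)
      set F : Set V := {v | ∀ u ∈ I, G.Adj v u} with hF
      rcases Set.eq_empty_or_nonempty F with hFe | hFne
      · -- Case A : no full vertex
        have hlow : ∀ v : V, (I.filter (fun u => G.Adj v u)).card ≤ s - 1 := by
          intro v
          rcases fact1 v with h | h
          · exact h
          · exact absurd (show v ∈ F from h) (by simp [hFe])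
        have hnoindep : ∀ v : V, ∀ t : Finset V, (∀ x ∈ t, G.Adj v x) → Indep t →
            t.card ≤ s - 1 := by
          intro v t hadjt hindept
          by_contra hcon
          push_neg at hcon
          obtain ⟨W, hWsub, hWcard⟩ := Finset.exists_subset_card_eq (show s ≤ t.card by omega)
          set Bad : Finset V := (insert v W) ∪ (insert v W).biUnion
            (fun x => I.filter (fun u => G.Adj x u)) with hBad
          have hBadcard : Bad.card ≤ (s+1) + (s+1) * (s-1) := by
            have hWc : (insert v W).card ≤ s + 1 := by
              calc (insert v W).card ≤ W.card + 1 := Finset.card_insert_le _ _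
                _ = s + 1 := by rw [hWcard]
            calc Bad.card ≤ (insert v W).card + ((insert v W).biUnion
                  (fun x => I.filter (fun u => G.Adj x u))).card := Finset.card_union_le _ _
              _ ≤ (insert v W).card + ∑ x ∈ insert v W, (I.filter (fun u => G.Adj x u)).card :=
                  by gcongr; exact Finset.card_biUnion_le
              _ ≤ (insert v W).card + ∑ _x ∈ insert v W, (s-1) := by
                  gcongr with x hx
                  exact hlow x
              _ = (insert v W).card + (insert v W).card * (s-1) := by
                  rw [Finset.sum_const, smul_eq_mul]
              _ ≤ (s+1) + (s+1) * (s-1) := by gcongr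
          have hIBad : 0 < (I \ Bad).card := by
            have h1 := Finset.card_le_card_sdiff_add_card (s := I) (t := Bad)
            have h2 : (s+1) + (s+1)*(s-1) < m0 := by
              rw [hm0]
              obtain ⟨s', rfl⟩ : ∃ s', s = s' + 1 := ⟨s-1, by omega⟩
              simp only [Nat.add_sub_cancel]
              nlinarith
            omega
          obtain ⟨u', hu'⟩ := Finset.card_pos.1 hIBad
          rw [Finset.mem_sdiff] at hu'
          obtain ⟨hu'I, hu'B⟩ := hu'
          have hu'iv : u' ∉ insert v W := fun h => hu'B (Finset.mem_union_left _ h)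
          have hu'v : u' ≠ v := fun h => hu'iv (h ▸ Finset.mem_insert_self v W)
          have hu'W : ∀ x ∈ W, u' ≠ x := fun x hx h =>
            hu'iv (h ▸ Finset.mem_insert_of_mem hx)
          have hu'nadj : ∀ x ∈ insert v W, ¬ G.Adj x u' := by
            intro x hx hadj
            exact hu'B (Finset.mem_union_right _ (Finset.mem_biUnion.2
              ⟨x, hx, Finset.mem_filter.2 ⟨hu'I, hadj⟩⟩))
          set w : Fin s → V := fun i => ((W.equivFinOfCardEq hWcard).symm i : V) with hw
          have hwmem : ∀ i, w i ∈ W := fun i => Finset.coe_mem _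
          have hwinj : Function.Injective w := by
            intro i j hij
            exact (W.equivFinOfCardEq hWcard).symm.injective (Subtype.ext hij)
          refine star_contra v w u' hwinj (fun i => hadjt _ (hWsub (hwmem i))) ?_ ?_ ?_ hu'v ?_
          · intro i j hij
            exact hindept (hWsub (hwmem i)) (hWsub (hwmem j)) (fun h => hij (hwinj h))
          · intro hadj
            exact hu'nadj v (Finset.mem_insert_self v W) hadj.symm
          · intro i hadj
            exact hu'nadj (w i) (Finset.mem_insert_of_mem (hwmem i)) hadj.symm
          · intro i h
            exact hu'W (w i) (hwmem i) h
        by_cases hVk : Fintype.card V ≤ k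
        · exact le_trans hVk (le_trans (le_max_left _ _) (le_max_left _ _))
        · push_neg at hVk
          have hclique : ∀ t : Finset V, (∀ a ∈ t, ∀ b ∈ t, a ≠ b → G.Adj a b) →
              t.card ≤ k - 1 := by
            intro t hcl
            by_contra hcon
            push_neg at hcon
            obtain ⟨tk, htksub, htkcard⟩ := Finset.exists_subset_card_eq
              (show k ≤ t.card by omega)
            obtain ⟨v, hv⟩ : ∃ v, v ∉ tk := by
              by_contra hall
              push_neg at hall
              have := Finset.card_le_card (fun x _ => hall x : (Finset.univ : Finset V) ⊆ tk)
              rw [Finset.card_univ] at this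
              omega
            have hcf := (hcolv v).cliqueFree (show k-1 < k by omega)
            set t' : Finset ↥({v}ᶜ : Set V) := tk.attach.image
              (fun x => (⟨x.1, by
                simp only [Set.mem_compl_singleton_iff]
                rintro rfl
                exact hv x.2⟩ : ↥({v}ᶜ : Set V))) with ht'
            refine hcf t' ⟨?_, ?_⟩
            · intro a ha b hb hab
              rw [ht', Finset.mem_coe, Finset.mem_image] at ha hb
              obtain ⟨xa, hxa, rfl⟩ := ha
              obtain ⟨xb, hxb, rfl⟩ := hb
              have hne : (xa : V) ≠ (xb : V) := by
                intro h
                exact hab (by simp [Subtype.ext h])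
              exact hcl _ (htksub xa.2) _ (htksub xb.2) hne
            · rw [ht', Finset.card_image_of_injOn, Finset.card_attach, htkcard]
              intro a _ b _ h
              have hval := congrArg Subtype.val h
              exact Subtype.ext hval
          have hdeg : ∀ v : V, ∀ t : Finset V, (∀ x ∈ t, G.Adj v x) → t.card ≤ D := by
            intro v t hadjt
            by_contra hcon
            push_neg at hcon
            rcases ramsey (k-1) s V G t (by omega) with
              ⟨t', ht'sub, ht'card, ht'cl⟩ | ⟨t', ht'sub, ht'card, ht'ind⟩
            · have hvex : v ∉ t' := fun h => G.irrefl (hadjt v (ht'sub h))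
              have hins := hclique (insert v t') ?_
              · rw [Finset.card_insert_of_notMem hvex, ht'card] at hins
                omega
              · intro a ha b hb hab
                rcases Finset.mem_insert.1 ha with rfl | ha' <;>
                  rcases Finset.mem_insert.1 hb with rfl | hb'
                · exact absurd rfl hab
                · exact hadjt b (ht'sub hb')
                · exact (hadjt a (ht'sub ha')).symm
                · exact ht'cl ha' hb' hab
            · have := hnoindep v t' (fun x hx => hadjt x (ht'sub hx)) ht'ind
              omega
          have hpre : G.Preconnected := preconnected_of_critical hcolv hncol
          obtain ⟨u0⟩ := hne
          have hreach : ∀ x : V, ∃ p : G.Walk x u0, p.length ≤ 3 := by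
            intro x
            have h3 := dist_le_three hfreeP (hpre x u0)
            obtain ⟨p, hp⟩ := (hpre x u0).exists_walk_length_eq_dist
            exact ⟨p, by omega⟩
          exact le_trans (ball_card_bound hdeg u0 hreach) (le_max_right _ _)
      · -- Case B : there is a full vertex
        have hIL : ∀ u ∈ I, u ∈ Fᶜ := by
          intro u hu hmem
          exact G.irrefl (hmem u hu)
        have hcross : ∀ x ∈ F, ∀ y ∈ Fᶜ, G.Adj x y := by
          intro x hx y hy
          by_contra hnadj
          have hylow : (I.filter (fun u => G.Adj y u)).card ≤ s - 1 := by
            rcases fact1 y with h | h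
            · exact h
            · exact absurd (show y ∈ F from h) hy
          have hxnI : x ∉ I := by
            intro hxI
            exact G.irrefl (hx x hxI)
          have hsle : s ≤ (I \ insert y (I.filter (fun u => G.Adj y u))).card := by
            have h1 : (insert y (I.filter (fun u => G.Adj y u))).card ≤ s := by
              calc (insert y (I.filter (fun u => G.Adj y u))).card
                  ≤ (I.filter (fun u => G.Adj y u)).card + 1 := Finset.card_insert_le _ _
                _ ≤ s := by omega
            have h2 := Finset.card_le_card_sdiff_add_card (s := I)
              (t := insert y (I.filter (fun u => G.Adj y u)))
            have h3 : 2*s + 2 ≤ m0 := by rw [hm0]; nlinarith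
            omega
          obtain ⟨S, hSsub, hScard⟩ := Finset.exists_subset_card_eq hsle
          have hSpr : ∀ z ∈ S, z ∈ I ∧ z ≠ y ∧ ¬ G.Adj y z := by
            intro z hz
            have := hSsub hz
            rw [Finset.mem_sdiff, Finset.mem_insert] at this
            refine ⟨this.1, fun h => this.2 (Or.inl h), fun h => this.2 ?_⟩
            exact Or.inr (Finset.mem_filter.2 ⟨this.1, h⟩)
          set w : Fin s → V := fun i => ((S.equivFinOfCardEq hScard).symm i : V) with hw
          have hwmem : ∀ i, w i ∈ S := fun i => Finset.coe_mem _
          have hwinj : Function.Injective w := by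
            intro i j hij
            exact (S.equivFinOfCardEq hScard).symm.injective (Subtype.ext hij)
          have hxy : y ≠ x := fun h => hy (h ▸ hx)
          refine star_contra x w y hwinj ?_ ?_ ?_ ?_ hxy ?_
          · intro i
            exact hx _ (hSpr _ (hwmem i)).1
          · intro i j hij
            exact hInadj _ (hSpr _ (hwmem i)).1 _ (hSpr _ (hwmem j)).1 (fun h => hij (hwinj h))
          · intro hadj
            exact hnadj hadj.symm
          · intro i
            exact (hSpr _ (hwmem i)).2.2
          · intro i h
            exact (hSpr _ (hwmem i)).2.1 h.symm
        -- chromatic numbers of the two sides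
        have hLneT : Nonempty ↥(Fᶜ) := by
          have h0 : 0 < I.card := by omega
          obtain ⟨a, ha⟩ := Finset.card_pos.1 h0
          exact ⟨⟨a, hIL a ha⟩⟩
        have hFneT : Nonempty ↥F := ⟨⟨hFne.choose, hFne.choose_spec⟩⟩
        have hFfin : (G.induce F).chromaticNumber ≠ ⊤ := by
          have := (G.induce F).colorable_of_fintype.chromaticNumber_le
          intro h
          rw [h] at this
          simp at this
        have hLfin : (G.induce Fᶜ).chromaticNumber ≠ ⊤ := by
          have := (G.induce Fᶜ).colorable_of_fintype.chromaticNumber_le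
          intro h
          rw [h] at this
          simp at this
        set cF : ℕ := (G.induce F).chromaticNumber.toNat with hcFd
        set cL : ℕ := (G.induce Fᶜ).chromaticNumber.toNat with hcLd
        have hcFeq : (G.induce F).chromaticNumber = (cF : ℕ∞) := (ENat.coe_toNat hFfin).symm
        have hcLeq : (G.induce Fᶜ).chromaticNumber = (cL : ℕ∞) := (ENat.coe_toNat hLfin).symm
        have hcFcol : (G.induce F).Colorable cF := colorable_of_chromaticNumber_eq hcFeq
        have hcLcol : (G.induce Fᶜ).Colorable cL := colorable_of_chromaticNumber_eq hcLeq
        have hcFpos : 1 ≤ cF := by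
          by_contra h
          push_neg at h
          have h0 : cF = 0 := by omega
          rw [h0] at hcFcol
          exact (@not_colorable_zero _ _ hFneT) hcFcol
        have hcLpos : 1 ≤ cL := by
          by_contra h
          push_neg at h
          have h0 : cL = 0 := by omega
          rw [h0] at hcLcol
          exact (@not_colorable_zero _ _ hLneT) hcLcol
        have hcFnot : ¬ (G.induce F).Colorable (cF - 1) := not_colorable_succ hcFeq (by omega)
        have hcLnot : ¬ (G.induce Fᶜ).Colorable (cL - 1) := not_colorable_succ hcLeq (by omega)
        have hsum_ge : k ≤ cF + cL := by
          by_contra h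
          push_neg at h
          exact hncol ((combine_colorings F hcFcol hcLcol).mono (by omega))
        have hsum_le : cF + cL ≤ k := by
          obtain ⟨p, q, hpq, hcp, hcq⟩ := split_coloring hcolk F hcross
          have h1 : cF ≤ p := by
            by_contra h
            push_neg at h
            exact hcFnot (hcp.mono (by omega))
          have h2 : cL ≤ q := by
            by_contra h
            push_neg at h
            exact hcLnot (hcq.mono (by omega))
          omega
        -- the induced subgraph on Fᶜ is cL-vertex-critical
        have hLcrit : IsKVertexCritical (G.induce Fᶜ) cL := by
          refine ⟨chromaticNumber_eq_of hcLcol hcLnot, ?_⟩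
          intro v
          have hWcol : (G.induce {(v : V)}ᶜ).Colorable (k-1) := hcolv v.1
          set F' : Set ↥({(v : V)}ᶜ : Set V) := {x | (x : V) ∈ F} with hF'd
          have hcross' : ∀ x ∈ F', ∀ y ∈ F'ᶜ, (G.induce {(v : V)}ᶜ).Adj x y := by
            intro x hx y hy
            exact hcross x.1 hx y.1 hy
          obtain ⟨p, q, hpq, hcp, hcq⟩ := split_coloring hWcol F' hcross'
          have hvL : (v : V) ∈ Fᶜ := v.2
          have hvneF : ∀ x : ↥F, (x : V) ∈ ({(v : V)}ᶜ : Set V) := by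
            intro x
            simp only [Set.mem_compl_singleton_iff]
            intro h
            exact hvL (h ▸ x.2)
          have hFemb : (G.induce F).Colorable p := by
            refine Colorable.of_hom (induceEmbOf (H := G.induce {(v : V)}ᶜ) (T := F')
              (fun x => ⟨⟨x.1, hvneF x⟩, x.2⟩) ?_ ?_).toHom hcp
            · intro a b h
              apply Subtype.ext
              have h1 := congrArg Subtype.val h
              have h2 := congrArg Subtype.val h1
              exact h2
            · intro a b
              exact Iff.rfl
          have h1 : cF ≤ p := by
            by_contra h
            push_neg at h
            exact hcFnot (hFemb.mono (by omega))
          have hq : q ≤ cL - 1 := by omega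
          have hvneL : ∀ x : ↥({v}ᶜ : Set ↥(Fᶜ : Set V)), ((x : ↥(Fᶜ : Set V)) : V) ∈
              ({(v : V)}ᶜ : Set V) := by
            intro x
            simp only [Set.mem_compl_singleton_iff]
            intro h
            exact x.2 (Subtype.ext h)
          have hLemb : ((G.induce Fᶜ).induce {v}ᶜ).Colorable q := by
            refine Colorable.of_hom (induceEmbOf (H := G.induce {(v : V)}ᶜ) (T := F'ᶜ)
              (fun x => ⟨⟨x.1.1, hvneL x⟩, by exact x.1.2⟩) ?_ ?_).toHom hcq
            · intro a b h
              apply Subtype.ext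
              apply Subtype.ext
              have h1 := congrArg Subtype.val h
              have h2 := congrArg Subtype.val h1
              exact h2
            · intro a b
              exact Iff.rfl
          have hcol' : ((G.induce Fᶜ).induce {v}ᶜ).Colorable (cL - 1) :=
            hLemb.mono (by omega)
          calc ((G.induce Fᶜ).induce {v}ᶜ).chromaticNumber ≤ ((cL - 1 : ℕ) : ℕ∞) :=
              hcol'.chromaticNumber_le
            _ < (cL : ℕ∞) := by
              rw [Nat.cast_lt]
              omega
        -- apply the induction hypothesis
        have hcLk : cL < k := by omega
        have hfreeP' : HFree (pathGraph 5) (G.induce Fᶜ) :=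
          hfree_of_embedding (SimpleGraph.Embedding.induce Fᶜ) hfreeP
        have hfreeS' : HFree (starPlusP1 s) (G.induce Fᶜ) :=
          hfree_of_embedding (SimpleGraph.Embedding.induce Fᶜ) hfreeS
        have hLbound := hf cL hcLk ↥(Fᶜ) (G.induce Fᶜ) hLcrit hfreeP' hfreeS'
        have hIcardle : I.card ≤ Fintype.card ↥(Fᶜ) := by
          have hinj : Function.Injective (fun x : ↥I => (⟨x.1, hIL x.1 x.2⟩ : ↥(Fᶜ : Set V))) := by
            intro a b h
            have := congrArg (fun z => ((z : ↥(Fᶜ : Set V)) : V)) h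
            exact Subtype.ext this
          have h1 := Fintype.card_le_of_injective _ hinj
          rwa [Fintype.card_coe] at h1
        have : α ≤ M := by
          calc α = I.card := hIcard'.symm
            _ ≤ Fintype.card ↥(Fᶜ) := hIcardle
            _ ≤ f cL hcLk := hLbound
            _ ≤ M := hMle cL hcLk
        omega
end Main

theorem stmt16 (s : ℕ) (hs : 1 ≤ s) : ∃ N : ℕ,
    ∀ (V : Type) [Fintype V] (G : SimpleGraph V),
      IsKVertexCritical G 5 → HFree (pathGraph 5) G → HFree (starPlusP1 s) G →
      Fintype.card V ≤ N := key_bound s hs 5
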